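/- Let X be a Banach space and f : X → ℝ ∪ {+∞} proper, convex, lower semicontinuous, and bounded below. Suppose there exists a > 0 such that every subgradient p ∈ ∂f(x) (for any x) satisfies ‖p‖ ≥ a‖x‖. Then f attains its global minimum at 0. -/

import Mathlib

open Set Filter Topology

variable {X : Type*} [NormedAddCommGroup X] [NormedSpace ℝ X] [CompleteSpace X]

/-- The convex subdifferential of an extended-real-valued function. -/
def Subdiff (f : X → EReal) (x : X) : Set (X →L[ℝ] ℝ) :=
  {p | ∀ y : X, f x + ((p (y - x) : ℝ) : EReal) ≤ f y}

/-- The ε-subdifferential. -/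
def EpsSubdiff (f : X → EReal) (ε : ℝ) (x : X) : Set (X →L[ℝ] ℝ) :=
  {p | ∀ y : X, f x + ((p (y - x) - ε : ℝ) : EReal) ≤ f y}

/-- f is proper: never -∞ and not identically +∞. -/
def EProper (f : X → EReal) : Prop := (∃ x, f x ≠ ⊤) ∧ ∀ x, f x ≠ ⊥

/-- Convexity of an extended-real-valued function. -/
def EConvex (f : X → EReal) : Prop :=
  ∀ x y : X, ∀ t : ℝ, 0 ≤ t → t ≤ 1 →
    f (t • x + (1 - t) • y) ≤ ((t : ℝ) : EReal) * f x + (((1 - t : ℝ)) : EReal) * f y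

lemma ekeland_weak (F : X → ℝ) (hlsc : LowerSemicontinuous F) (m : ℝ) (hm : ∀ x, m ≤ F x)
    (κ : ℝ) (hκ : 0 < κ) (x₀ : X) :
    ∃ y : X, F y ≤ F x₀ ∧ ∀ z, F y ≤ F z + κ * ‖z - y‖ := by
  -- step existence
  have step : ∀ (x : X) (n : ℕ), ∃ x' : X, (F x' + κ * ‖x' - x‖ ≤ F x) ∧
      ∀ z, F z + κ * ‖z - x‖ ≤ F x → F x' ≤ F z + (1/2)^n := by
    intro x n
    set S : Set X := {z | F z + κ * ‖z - x‖ ≤ F x} with hS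
    have hxS : x ∈ S := by simp [hS]
    have hne : (F '' S).Nonempty := ⟨F x, x, hxS, rfl⟩
    have hbdd : BddBelow (F '' S) := ⟨m, by rintro _ ⟨z, _, rfl⟩; exact hm z⟩
    have hlt : sInf (F '' S) < sInf (F '' S) + (1/2)^n := lt_add_of_pos_right _ (by positivity)
    obtain ⟨_, ⟨x', hx'S, rfl⟩, hx'⟩ := exists_lt_of_csInf_lt hne hlt
    exact ⟨x', hx'S, fun z hz => le_trans hx'.le
      (by linarith [csInf_le hbdd (mem_image_of_mem F hz)])⟩
  choose next hnext1 hnext2 using step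
  let seq : ℕ → X := fun n => Nat.recAux x₀ (fun n x => next x n) n
  have seq0 : seq 0 = x₀ := rfl
  have seqS : ∀ n, seq (n+1) = next (seq n) n := fun n => rfl
  have h1 : ∀ n, F (seq (n+1)) + κ * ‖seq (n+1) - seq n‖ ≤ F (seq n) := by
    intro n; rw [seqS]; exact hnext1 (seq n) n
  have h2 : ∀ n z, F z + κ * ‖z - seq n‖ ≤ F (seq n) → F (seq (n+1)) ≤ F z + (1/2)^n := by
    intro n; rw [seqS]; exact hnext2 (seq n) n
  have chain : ∀ n k, F (seq (n+k)) + κ * ‖seq (n+k) - seq n‖ ≤ F (seq n) := by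
    intro n k
    induction k with
    | zero => simp
    | succ k ih =>
      have t1 := h1 (n+k)
      have tri : ‖seq (n+k+1) - seq n‖ ≤ ‖seq (n+k+1) - seq (n+k)‖ + ‖seq (n+k) - seq n‖ :=
        norm_sub_le_norm_sub_add_norm_sub _ _ _
      have := mul_le_mul_of_nonneg_left tri hκ.le
      show F (seq (n+(k+1))) + κ * ‖seq (n+(k+1)) - seq n‖ ≤ F (seq n)
      have e : n + (k+1) = (n+k)+1 := rfl
      rw [e]; nlinarith
  have hanti : Antitone (fun n => F (seq n)) := by
    apply antitone_nat_of_succ_le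
    intro n
    have := h1 n
    nlinarith [norm_nonneg (seq (n+1) - seq n), hκ.le]
  have hbddb : BddBelow (range fun n => F (seq n)) := ⟨m, by rintro _ ⟨n, rfl⟩; exact hm _⟩
  set L : ℝ := ⨅ n, F (seq n) with hL
  have hLle : ∀ n, L ≤ F (seq n) := fun n => ciInf_le hbddb n
  have htendF : Tendsto (fun n => F (seq n)) atTop (𝓝 L) :=
    tendsto_atTop_ciInf hanti hbddb
  have hdist : ∀ n k, ‖seq (n+k) - seq n‖ ≤ (F (seq n) - L) / κ := by
    intro n k
    have := chain n k
    have h3 := hLle (n+k)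
    rw [le_div_iff₀ hκ]
    nlinarith
  have hcauchy : CauchySeq seq := by
    apply cauchySeq_of_le_tendsto_0' (fun n => (F (seq n) - L) / κ)
    · intro n m hnm
      obtain ⟨k, rfl⟩ := Nat.exists_eq_add_of_le hnm
      rw [dist_comm, dist_eq_norm]
      exact hdist n k
    · have : Tendsto (fun n => (F (seq n) - L) / κ) atTop (𝓝 ((L - L)/κ)) :=
        ((htendF.sub tendsto_const_nhds).div_const κ)
      simpa using this
  obtain ⟨y, hy⟩ := cauchySeq_tendsto_of_complete hcauchy
  have hFyL : F y ≤ L := by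
    by_contra hlt
    push_neg at hlt
    obtain ⟨r, hr1, hr2⟩ := exists_between hlt
    have := hlsc y r hr2
    have hev : ∀ᶠ n in atTop, r < F (seq n) := hy.eventually this
    have hrL : r ≤ L := by
      have := htendF
      have : L ∈ upperBounds {r} → True := fun _ => trivial
      have := ge_of_tendsto htendF (hev.mono (fun n hn => hn.le))
      exact this
    linarith
  have hyN : ∀ n, F y + κ * ‖y - seq n‖ ≤ F (seq n) := by
    intro n
    have hnorm : Tendsto (fun k => ‖seq (n+k) - seq n‖) atTop (𝓝 ‖y - seq n‖) := by
      have : Tendsto (fun k => seq (n+k)) atTop (𝓝 y) := by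
        exact hy.comp (tendsto_atTop_mono (fun k => Nat.le_add_left k n) tendsto_id)
      exact ((this.sub tendsto_const_nhds).norm)
    have hub : ∀ k, κ * ‖seq (n+k) - seq n‖ ≤ F (seq n) - L := by
      intro k; have := chain n k; have := hLle (n+k); linarith
    have : κ * ‖y - seq n‖ ≤ F (seq n) - L :=
      le_of_tendsto (hnorm.const_mul κ) (Eventually.of_forall hub)
    linarith
  refine ⟨y, ?_, ?_⟩
  · have := hyN 0
    rw [seq0] at this
    nlinarith [norm_nonneg (y - x₀), hκ.le]
  · intro z
    by_contra hcon
    push_neg at hcon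
    have hzS : ∀ n, F z + κ * ‖z - seq n‖ ≤ F (seq n) := by
      intro n
      have tri : ‖z - seq n‖ ≤ ‖z - y‖ + ‖y - seq n‖ := norm_sub_le_norm_sub_add_norm_sub _ _ _
      have := hyN n
      nlinarith [hκ.le]
    have hFzn : ∀ n, F (seq (n+1)) ≤ F z + (1/2)^n := fun n => h2 n z (hzS n)
    have hLz : L ≤ F z := by
      have t1 : Tendsto (fun n : ℕ => F (seq (n+1))) atTop (𝓝 L) :=
        htendF.comp (tendsto_add_atTop_nat 1)
      have t2 : Tendsto (fun n : ℕ => F z + (1/2:ℝ)^n) atTop (𝓝 (F z + 0)) :=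
        tendsto_const_nhds.add (tendsto_pow_atTop_nhds_zero_of_lt_one (by norm_num) (by norm_num))
      have := le_of_tendsto_of_tendsto' t1 t2 hFzn
      simpa using this
    nlinarith [norm_nonneg (z - y), hFyL]

lemma exists_subgradient (f : X → EReal) (hconv : EConvex f) (hbot : ∀ x, f x ≠ ⊥)
    (y : X) (c : ℝ) (hy : f y = (c : ℝ)) (κ : ℝ) (hκ : 0 ≤ κ)
    (hmin : ∀ z : X, f y ≤ f z + ((κ * ‖z - y‖ : ℝ) : EReal)) :
    ∃ p ∈ Subdiff f y, ‖p‖ ≤ κ := by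
  classical
  set D : Set X := {z | f z ≠ ⊤} with hD
  have hyD : y ∈ D := by simp [hD, hy]
  set r : X → ℝ := fun z => (f z).toReal with hr
  have hfr : ∀ z ∈ D, f z = ((r z : ℝ) : EReal) := by
    intro z hz
    simp [hr, EReal.coe_toReal hz (hbot z)]
  have hry : r y = c := by simp [hr, hy]
  have hr_lb : ∀ z ∈ D, c - κ * ‖z - y‖ ≤ r z := by
    intro z hz
    have := hmin z
    rw [hy, hfr z hz, ← EReal.coe_add, EReal.coe_le_coe_iff] at this
    linarith
  -- the inf-convolution Q
  set G : X → X → ℝ := fun v z => r z - c + κ * ‖y + v - z‖ with hG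
  have hGlb : ∀ v, ∀ z ∈ D, -(κ * ‖v‖) ≤ G v z := by
    intro v z hz
    have h1 := hr_lb z hz
    have tri : ‖z - y‖ ≤ ‖v‖ + ‖y + v - z‖ := by
      have h2 : z - y = v - (y + v - z) := by abel
      calc ‖z - y‖ = ‖v - (y + v - z)‖ := by rw [h2]
        _ ≤ _ := norm_sub_le _ _
    simp only [hG]
    nlinarith [mul_le_mul_of_nonneg_left tri hκ]
  set Q : X → ℝ := fun v => sInf (G v '' D) with hQ
  have hne : ∀ v, (G v '' D).Nonempty := fun v => ⟨G v y, y, hyD, rfl⟩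
  have hbddQ : ∀ v, BddBelow (G v '' D) := fun v =>
    ⟨-(κ * ‖v‖), by rintro _ ⟨z, hz, rfl⟩; exact hGlb v z hz⟩
  have hQ_lb : ∀ v, -(κ * ‖v‖) ≤ Q v := fun v =>
    le_csInf (hne v) (by rintro _ ⟨z, hz, rfl⟩; exact hGlb v z hz)
  have hQ_le : ∀ v, ∀ z ∈ D, Q v ≤ G v z := fun v z hz =>
    csInf_le (hbddQ v) (mem_image_of_mem _ hz)
  have hQ_ub : ∀ v, Q v ≤ κ * ‖v‖ := by
    intro v
    have := hQ_le v y hyD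
    simpa [hG, hry, add_sub_cancel_left] using this
  have hQ0 : Q 0 = 0 := le_antisymm (by simpa using hQ_ub 0) (by simpa using hQ_lb 0)
  -- convexity of Q
  have hQconv : ∀ u v : X, ∀ t : ℝ, 0 < t → t < 1 →
      Q (t • u + (1 - t) • v) ≤ t * Q u + (1 - t) * Q v := by
    intro u v t ht0 ht1
    have key : ∀ z₁ ∈ D, ∀ z₂ ∈ D,
        Q (t • u + (1 - t) • v) ≤ t * G u z₁ + (1 - t) * G v z₂ := by
      intro z₁ hz₁ z₂ hz₂
      have hzD : t • z₁ + (1 - t) • z₂ ∈ D := by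
        have hc := hconv z₁ z₂ t ht0.le ht1.le
        rw [hfr z₁ hz₁, hfr z₂ hz₂, ← EReal.coe_mul, ← EReal.coe_mul, ← EReal.coe_add] at hc
        intro htop
        rw [htop] at hc
        exact (not_le.2 (EReal.coe_lt_top _)) hc
      have hrz : r (t • z₁ + (1 - t) • z₂) ≤ t * r z₁ + (1 - t) * r z₂ := by
        have hc := hconv z₁ z₂ t ht0.le ht1.le
        rw [hfr z₁ hz₁, hfr z₂ hz₂, hfr _ hzD, ← EReal.coe_mul, ← EReal.coe_mul,
          ← EReal.coe_add, EReal.coe_le_coe_iff] at hc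
        exact hc
      have hnorm : ‖y + (t • u + (1 - t) • v) - (t • z₁ + (1 - t) • z₂)‖ ≤
          t * ‖y + u - z₁‖ + (1 - t) * ‖y + v - z₂‖ := by
        have : y + (t • u + (1 - t) • v) - (t • z₁ + (1 - t) • z₂) =
            t • (y + u - z₁) + (1 - t) • (y + v - z₂) := by module
        calc ‖y + (t • u + (1 - t) • v) - (t • z₁ + (1 - t) • z₂)‖
            = ‖t • (y + u - z₁) + (1 - t) • (y + v - z₂)‖ := by rw [this]
          _ ≤ ‖t • (y + u - z₁)‖ + ‖(1 - t) • (y + v - z₂)‖ := norm_add_le _ _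
          _ = t * ‖y + u - z₁‖ + (1 - t) * ‖y + v - z₂‖ := by
              rw [norm_smul, norm_smul, Real.norm_eq_abs, Real.norm_eq_abs,
                abs_of_pos ht0, abs_of_pos (by linarith)]
      calc Q (t • u + (1 - t) • v) ≤ G (t • u + (1 - t) • v) (t • z₁ + (1 - t) • z₂) :=
            hQ_le _ _ hzD
        _ ≤ t * G u z₁ + (1 - t) * G v z₂ := by
            simp only [hG]
            nlinarith [mul_le_mul_of_nonneg_left hnorm hκ]
    -- take infs
    have step1 : ∀ z₂ ∈ D, Q (t • u + (1 - t) • v) ≤ t * Q u + (1 - t) * G v z₂ := by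
      intro z₂ hz₂
      have : (Q (t • u + (1 - t) • v) - (1 - t) * G v z₂) / t ≤ Q u := by
        apply le_csInf (hne u)
        rintro _ ⟨z₁, hz₁, rfl⟩
        rw [div_le_iff₀ ht0]
        nlinarith [key z₁ hz₁ z₂ hz₂]
      rw [div_le_iff₀ ht0] at this
      nlinarith
    have : (Q (t • u + (1 - t) • v) - t * Q u) / (1 - t) ≤ Q v := by
      apply le_csInf (hne v)
      rintro _ ⟨z₂, hz₂, rfl⟩
      rw [div_le_iff₀ (by linarith)]
      nlinarith [step1 z₂ hz₂]
    rw [div_le_iff₀ (by linarith)] at this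
    nlinarith
  -- directional derivative N
  set H : X → ℝ → ℝ := fun v t => Q (t • v) / t with hH
  set N : X → ℝ := fun v => sInf (H v '' Ioi 0) with hN
  have hHlb : ∀ v, ∀ t ∈ Ioi (0:ℝ), -(κ * ‖v‖) ≤ H v t := by
    intro v t ht
    simp only [hH]
    rw [le_div_iff₀ ht]
    have := hQ_lb (t • v)
    rw [norm_smul, Real.norm_eq_abs, abs_of_pos ht] at this
    nlinarith [mem_Ioi.mp ht]
  have hneH : ∀ v, (H v '' Ioi 0).Nonempty := fun v => ⟨H v 1, 1, by norm_num, rfl⟩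
  have hbddH : ∀ v, BddBelow (H v '' Ioi 0) :=
    fun v => ⟨-(κ * ‖v‖), by rintro _ ⟨t, ht, rfl⟩; exact hHlb v t ht⟩
  have hN_le : ∀ v, ∀ t ∈ Ioi (0:ℝ), N v ≤ H v t := fun v t ht =>
    csInf_le (hbddH v) (mem_image_of_mem _ ht)
  have hN_lb : ∀ v, -(κ * ‖v‖) ≤ N v := fun v =>
    le_csInf (hneH v) (by rintro _ ⟨t, ht, rfl⟩; exact hHlb v t ht)
  have hN_ub : ∀ v, N v ≤ κ * ‖v‖ := by
    intro v
    have := hN_le v 1 (by norm_num)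
    simp only [hH, one_smul, div_one] at this
    exact this.trans (hQ_ub v)
  have hNQ : ∀ v, N v ≤ Q v := by
    intro v
    have := hN_le v 1 (by norm_num)
    simpa [hH] using this
  -- monotonicity of H in t
  have hHmono : ∀ v, ∀ s t : ℝ, 0 < s → s ≤ t → H v s ≤ H v t := by
    intro v s t hs hst
    rcases eq_or_lt_of_le hst with rfl | hlt
    · exact le_refl _
    · have ht : (0:ℝ) < t := hs.trans hlt
      have hdiv0 : 0 < s / t := div_pos hs ht
      have hdiv1 : s / t < 1 := (div_lt_one ht).2 hlt
      have hc := hQconv (t • v) 0 (s/t) hdiv0 hdiv1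
      rw [smul_zero, add_zero, smul_smul, div_mul_cancel₀ _ ht.ne', hQ0, mul_zero, add_zero] at hc
      simp only [hH]
      rw [div_le_div_iff₀ hs ht]
      calc Q (s • v) * t ≤ (s / t * Q (t • v)) * t := by nlinarith
        _ = Q (t • v) * s := by field_simp
  -- N_hom
  have hN_hom : ∀ b : ℝ, 0 < b → ∀ v, N (b • v) = b * N v := by
    intro b hb v
    have hHb : ∀ t : ℝ, 0 < t → H (b • v) t = b * H v (t * b) := by
      intro t ht
      simp only [hH]
      rw [smul_smul]
      field_simp
    apply le_antisymm
    · rw [show b * N v = b * N v from rfl, ← div_le_iff₀' hb]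
      apply le_csInf (hneH v)
      rintro _ ⟨t, ht, rfl⟩
      rw [div_le_iff₀' hb]
      have h1 := hN_le (b • v) (t / b) (mem_Ioi.2 (div_pos (mem_Ioi.mp ht) hb))
      have h2 := hHb (t / b) (div_pos (mem_Ioi.mp ht) hb)
      rw [div_mul_cancel₀ _ hb.ne'] at h2
      rw [h2] at h1
      exact h1
    · apply le_csInf (hneH (b • v))
      rintro _ ⟨t, ht, rfl⟩
      rw [hHb t (mem_Ioi.mp ht)]
      exact mul_le_mul_of_nonneg_left
        (hN_le v (t * b) (mem_Ioi.2 (mul_pos (mem_Ioi.mp ht) hb))) hb.le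
  -- N_add
  have hN_add : ∀ u v, N (u + v) ≤ N u + N v := by
    intro u v
    have key : ∀ ε > (0:ℝ), N (u + v) ≤ N u + N v + ε := by
      intro ε hε
      obtain ⟨_, ⟨s, hs, rfl⟩, hsu⟩ := exists_lt_of_csInf_lt (hneH u)
        (lt_add_of_pos_right (N u) (half_pos hε))
      obtain ⟨_, ⟨t, ht, rfl⟩, htv⟩ := exists_lt_of_csInf_lt (hneH v)
        (lt_add_of_pos_right (N v) (half_pos hε))
      set w := min s t / 2 with hw
      have hw0 : 0 < w := by
        have := lt_min (mem_Ioi.mp hs) (mem_Ioi.mp ht); positivity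
      have h2ws : 2 * w ≤ s := by
        have := min_le_left s t; rw [hw]; linarith
      have h2wt : 2 * w ≤ t := by
        have := min_le_right s t; rw [hw]; linarith
      have hmid : Q (w • (u + v)) ≤ (Q ((2*w) • u) + Q ((2*w) • v)) / 2 := by
        have hc := hQconv ((2*w) • u) ((2*w) • v) (1/2) (by norm_num) (by norm_num)
        have e : (1/2 : ℝ) • ((2*w) • u) + (1 - 1/2 : ℝ) • ((2*w) • v) = w • (u + v) := by
          module
        rw [e] at hc
        linarith
      have hstep : H (u + v) w ≤ H u (2 * w) + H v (2 * w) := by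
        simp only [hH]
        rw [← add_div, div_le_div_iff₀ hw0 (by linarith : (0:ℝ) < 2*w)]
        nlinarith
      have h2wu : H u (2 * w) ≤ N u + ε/2 :=
        (hHmono u (2*w) s (by linarith) h2ws).trans hsu.le
      have h2wv : H v (2 * w) ≤ N v + ε/2 :=
        (hHmono v (2*w) t (by linarith) h2wt).trans htv.le
      calc N (u + v) ≤ H (u + v) w := hN_le _ w (mem_Ioi.2 hw0)
        _ ≤ H u (2*w) + H v (2*w) := hstep
        _ ≤ N u + ε/2 + (N v + ε/2) := add_le_add h2wu h2wv
        _ = N u + N v + ε := by ring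
    exact le_of_forall_pos_le_add key
  -- Hahn-Banach
  obtain ⟨g, -, hgN⟩ := exists_extension_of_le_sublinear ⊥ N hN_hom hN_add
    (fun x => by
      have h0 : ((⊥ : X →ₗ.[ℝ] ℝ)) x = 0 := rfl
      have hx : (x : X) = 0 := (Submodule.mem_bot ℝ).mp x.2
      rw [h0, hx]
      simpa using hN_lb 0)
  -- build the continuous linear map
  have hgb : ∀ v, ‖g v‖ ≤ κ * ‖v‖ := by
    intro v
    rw [Real.norm_eq_abs, abs_le]
    constructor
    · have := (hgN (-v)).trans (hN_ub (-v))
      rw [map_neg, norm_neg] at this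
      linarith
    · exact (hgN v).trans (hN_ub v)
  set p : X →L[ℝ] ℝ := g.mkContinuous κ hgb with hp
  refine ⟨p, ?_, LinearMap.mkContinuous_norm_le g hκ hgb⟩
  intro w
  rcases eq_or_ne (f w) ⊤ with hw | hw
  · rw [hw]; exact le_top
  · have hwD : w ∈ D := hw
    have hpw : p (w - y) ≤ r w - c := by
      have h1 : g (w - y) ≤ N (w - y) := hgN (w - y)
      have h2 : N (w - y) ≤ Q (w - y) := hNQ (w - y)
      have h3 : Q (w - y) ≤ G (w - y) w := hQ_le (w - y) w hwD
      have h4 : G (w - y) w = r w - c := by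
        simp only [hG]
        rw [show y + (w - y) - w = 0 by abel]
        simp
      have : p (w - y) = g (w - y) := rfl
      rw [this]
      linarith
    rw [hy, hfr w hwD, ← EReal.coe_add, EReal.coe_le_coe_iff]
    linarith

theorem stmt6 (f : X → EReal) (hproper : EProper f) (hconv : EConvex f)
    (hlsc : LowerSemicontinuous f)
    (hbdd : ∃ m : ℝ, ∀ x : X, (m : EReal) ≤ f x)
    (h : ∃ a : ℝ, 0 < a ∧ ∀ x : X, ∀ p ∈ Subdiff f x, a * ‖x‖ ≤ ‖p‖) :
    ∀ x : X, f 0 ≤ f x := by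
  intro x
  by_contra hcon
  push_neg at hcon
  obtain ⟨a, ha, hsub⟩ := h
  obtain ⟨m, hm⟩ := hbdd
  have hbot := hproper.2
  obtain ⟨c, hc1, hc2⟩ := EReal.exists_between_coe_real hcon
  obtain ⟨δ, hδ, hball⟩ : ∃ δ > 0, ∀ z : X, ‖z‖ < δ → (c : EReal) < f z := by
    have hev := hlsc 0 c hc2
    rw [Metric.eventually_nhds_iff] at hev
    obtain ⟨ε, hε, hev⟩ := hev
    exact ⟨ε, hε, fun z hz => hev (by rwa [dist_zero_right])⟩
  set κ : ℝ := a * δ / 2 with hκdef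
  have hκpos : 0 < κ := by positivity
  set F : X → ℝ := fun z => (min (f z) (c : EReal)).toReal with hF
  have hfin : ∀ z, min (f z) (c : EReal) ≠ ⊤ ∧ min (f z) (c : EReal) ≠ ⊥ := by
    intro z
    constructor
    · exact ne_top_of_le_ne_top (EReal.coe_ne_top c) (min_le_right _ _)
    · intro hb
      have hle : ((min m c : ℝ) : EReal) ≤ min (f z) (c : EReal) := by
        apply le_min
        · exact le_trans (by exact_mod_cast min_le_left m c) (hm z)
        · exact_mod_cast min_le_right m c
      rw [hb] at hle
      exact absurd hle (by simp)
  have hFcoe : ∀ z, ((F z : ℝ) : EReal) = min (f z) (c : EReal) := by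
    intro z
    exact EReal.coe_toReal (hfin z).1 (hfin z).2
  have hFlsc : LowerSemicontinuous F := by
    intro z r hr
    have h1 : (r : EReal) < min (f z) (c : EReal) := by
      rw [← hFcoe z]; exact_mod_cast hr
    have h2 : (r : EReal) < f z := h1.trans_le (min_le_left _ _)
    have h3 : (r : EReal) < (c : EReal) := h1.trans_le (min_le_right _ _)
    filter_upwards [hlsc z r h2] with w hw
    have : (r : EReal) < min (f w) (c : EReal) := lt_min hw h3
    rw [← hFcoe w] at this
    exact_mod_cast this
  have hFlb : ∀ z, min m c ≤ F z := by
    intro z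
    have : ((min m c : ℝ) : EReal) ≤ min (f z) (c : EReal) := by
      apply le_min
      · exact le_trans (by exact_mod_cast min_le_left m c) (hm z)
      · exact_mod_cast min_le_right m c
    rw [← hFcoe z] at this
    exact_mod_cast this
  obtain ⟨y, hy1, hy2⟩ := ekeland_weak F hFlsc (min m c) hFlb κ hκpos x
  have hFx : F x < c := by
    have hmx : min (f x) (c : EReal) = f x := min_eq_left hc1.le
    have : ((F x : ℝ) : EReal) < (c : EReal) := by rw [hFcoe x, hmx]; exact hc1
    exact_mod_cast this
  have hFy : F y < c := lt_of_le_of_lt hy1 hFx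
  have hfy : f y = ((F y : ℝ) : EReal) := by
    rcases le_total (f y) (c : EReal) with hle | hle
    · rw [hFcoe y, min_eq_left hle]
    · exfalso
      have : ((F y : ℝ) : EReal) = (c : EReal) := by rw [hFcoe y, min_eq_right hle]
      have : F y = c := by exact_mod_cast this
      linarith
  have hmin : ∀ z : X, f y ≤ f z + ((κ * ‖z - y‖ : ℝ) : EReal) := by
    intro z
    have h1 : ((F y : ℝ) : EReal) ≤ ((F z : ℝ) : EReal) + ((κ * ‖z - y‖ : ℝ) : EReal) := by
      rw [← EReal.coe_add]
      exact_mod_cast hy2 z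
    have h2 : ((F z : ℝ) : EReal) ≤ f z := by
      rw [hFcoe z]; exact min_le_left _ _
    calc f y = ((F y : ℝ) : EReal) := hfy
      _ ≤ ((F z : ℝ) : EReal) + ((κ * ‖z - y‖ : ℝ) : EReal) := h1
      _ ≤ f z + ((κ * ‖z - y‖ : ℝ) : EReal) := by gcongr
  obtain ⟨p, hpS, hpn⟩ := exists_subgradient f hconv hbot y (F y) hfy κ hκpos.le hmin
  have hap : a * ‖y‖ ≤ ‖p‖ := hsub y p hpS
  have hylt : ‖y‖ < δ := by nlinarith
  have := hball y hylt
  rw [hfy] at this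
  have : c < F y := by exact_mod_cast this
  linarith
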